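/- Let P ⊆ ℂ be a finite set and let 𝓑 be a finite family of distinct open subsets of ℂ such that: (i) every B ∈ 𝓑 has two distinct connected components each of which contains a point of P; and (ii) for any two distinct B, B′ ∈ 𝓑, either B ∩ B′ = ∅, or B is contained in some connected component of B′, or B′ is contained in some connected component of B. If 𝓑 is nonempty, then the number of elements of 𝓑 is strictly less than the number of elements of P. -/

import Mathlib

open Set

attribute [local instance] Classical.propDecidable

/-- `η` is a connected component of the set `S`. -/
def IsCompOf (η S : Set ℂ) : Prop := ∃ z ∈ S, η = connectedComponentIn S z

lemma comp_subset {c b : Set ℂ} (h : IsCompOf c b) : c ⊆ b := by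
  obtain ⟨z, hz, rfl⟩ := h; exact connectedComponentIn_subset b z

lemma comp_eq_cc {c b : Set ℂ} (h : IsCompOf c b) {p : ℂ} (hp : p ∈ c) :
    c = connectedComponentIn b p := by
  obtain ⟨z, hz, rfl⟩ := h; exact connectedComponentIn_eq hp

lemma comp_disjoint {c₁ c₂ b : Set ℂ} (h1 : IsCompOf c₁ b) (h2 : IsCompOf c₂ b)
    (hne : c₁ ≠ c₂) {p : ℂ} (hp1 : p ∈ c₁) (hp2 : p ∈ c₂) : False := by
  exact hne ((comp_eq_cc h1 hp1).trans (comp_eq_cc h2 hp2).symm)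

lemma aux (n : ℕ) : ∀ (P : Set ℂ) (B : Finset (Set ℂ)), P.Finite → B.card = n →
    (∀ b ∈ B, ∃ c₁ c₂ : Set ℂ, IsCompOf c₁ b ∧ IsCompOf c₂ b ∧ c₁ ≠ c₂ ∧
      (c₁ ∩ P).Nonempty ∧ (c₂ ∩ P).Nonempty) →
    (∀ b ∈ B, ∀ b' ∈ B, b ≠ b' →
      b ∩ b' = ∅ ∨ (∃ c : Set ℂ, IsCompOf c b' ∧ b ⊆ c) ∨
        (∃ c : Set ℂ, IsCompOf c b ∧ b' ⊆ c)) →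
    B.Nonempty → B.card < P.ncard := by
  induction n with
  | zero => intro P B hP hcard _ _ hne
            simp [Finset.card_eq_zero.mp hcard] at hne
  | succ n ih =>
    intro P B hP hcard hsep hnest hne
    -- pick a minimal element b of B
    obtain ⟨b, hbB, hbmin⟩ := B.exists_minimal hne
    obtain ⟨c₁, c₂, hc₁, hc₂, hcne, ⟨p₁, hp₁c, hp₁P⟩, ⟨p₂, hp₂c, hp₂P⟩⟩ := hsep b hbB
    have hp12 : p₁ ≠ p₂ := by
      rintro rfl; exact comp_disjoint hc₁ hc₂ hcne hp₁c hp₂c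
    -- key: if b' ∈ B, b' ≠ b, and p₁ ∈ b', then b ⊆ some component of b', containing p₂
    have key : ∀ b' ∈ B, b' ≠ b → p₁ ∈ b' → ∃ c, IsCompOf c b' ∧ p₁ ∈ c ∧ p₂ ∈ c := by
      intro b' hb'B hb'ne hp₁b'
      rcases hnest b hbB b' hb'B (Ne.symm hb'ne) with hdisj | ⟨c, hc, hbc⟩ | ⟨c, hc, hb'c⟩
      · exact absurd hdisj (by
          intro h
          have : p₁ ∈ b ∩ b' := ⟨comp_subset hc₁ hp₁c, hp₁b'⟩
          simp [h] at this)
      · exact ⟨c, hc, hbc (comp_subset hc₁ hp₁c), hbc (comp_subset hc₂ hp₂c)⟩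
      · exact absurd (lt_of_le_of_ne (hb'c.trans (comp_subset hc)) hb'ne)
          (fun h => (not_le_of_gt h) (hbmin hb'B h.le))
    set B' := B.erase b with hB'
    set P' := P \ {p₁} with hP'
    have hP'fin : P'.Finite := hP.diff
    have hP'card : P'.ncard = P.ncard - 1 := by
      rw [hP']; exact Set.ncard_diff_singleton_of_mem hp₁P
    have hPpos : 0 < P.ncard := (Set.ncard_pos hP).mpr ⟨p₁, hp₁P⟩
    by_cases hB'ne : B'.Nonempty
    · -- witness repair
      have hsep' : ∀ b' ∈ B', ∃ c₁ c₂ : Set ℂ, IsCompOf c₁ b' ∧ IsCompOf c₂ b' ∧ c₁ ≠ c₂ ∧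
          (c₁ ∩ P').Nonempty ∧ (c₂ ∩ P').Nonempty := by
        intro b' hb'
        have hb'B := Finset.mem_of_mem_erase hb'
        have hb'ne : b' ≠ b := Finset.ne_of_mem_erase hb'
        obtain ⟨d₁, d₂, hd₁, hd₂, hdne, ⟨q₁, hq₁d, hq₁P⟩, ⟨q₂, hq₂d, hq₂P⟩⟩ := hsep b' hb'B
        -- repair a witness point in a component
        have repair : ∀ (d : Set ℂ), IsCompOf d b' → ∀ q, q ∈ d → q ∈ P →
            (d ∩ P').Nonempty := by
          intro d hd q hqd hqP
          by_cases hq : q = p₁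
          · subst hq
            obtain ⟨c, hc, hp₁c', hp₂c'⟩ := key b' hb'B hb'ne (comp_subset hd hqd)
            have : d = c := (comp_eq_cc hd hqd).trans (comp_eq_cc hc hp₁c').symm
            exact ⟨p₂, this ▸ hp₂c', hp₂P, by simp [hp12.symm]⟩
          · exact ⟨q, hqd, hqP, by simp [hq]⟩
        exact ⟨d₁, d₂, hd₁, hd₂, hdne, repair d₁ hd₁ q₁ hq₁d hq₁P,
          repair d₂ hd₂ q₂ hq₂d hq₂P⟩
      have hnest' : ∀ b ∈ B', ∀ b' ∈ B', b ≠ b' →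
          b ∩ b' = ∅ ∨ (∃ c : Set ℂ, IsCompOf c b' ∧ b ⊆ c) ∨
            (∃ c : Set ℂ, IsCompOf c b ∧ b' ⊆ c) := fun x hx y hy =>
        hnest x (Finset.mem_of_mem_erase hx) y (Finset.mem_of_mem_erase hy)
      have hcard' : B'.card = n := by
        rw [hB', Finset.card_erase_of_mem hbB, hcard]; rfl
      have := ih P' B' hP'fin hcard' hsep' hnest' hB'ne
      omega
    · -- B = {b}, so card = 1 and P has at least 2 elements
      have hP2 : 1 < P.ncard := by
        rw [Set.one_lt_ncard_iff hP]
        exact ⟨p₁, p₂, hp₁P, hp₂P, hp12⟩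
      have hB'c : B'.card = 0 := by simp [Finset.not_nonempty_iff_eq_empty.mp hB'ne]
      have := Finset.card_erase_of_mem hbB
      rw [← hB'] at this
      omega

theorem stmt7 (P : Set ℂ) (hP : P.Finite) (B : Finset (Set ℂ))
    (hopen : ∀ b ∈ B, IsOpen b)
    (hsep : ∀ b ∈ B, ∃ c₁ c₂ : Set ℂ, IsCompOf c₁ b ∧ IsCompOf c₂ b ∧ c₁ ≠ c₂ ∧
      (c₁ ∩ P).Nonempty ∧ (c₂ ∩ P).Nonempty)
    (hnest : ∀ b ∈ B, ∀ b' ∈ B, b ≠ b' →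
      b ∩ b' = ∅ ∨ (∃ c : Set ℂ, IsCompOf c b' ∧ b ⊆ c) ∨
        (∃ c : Set ℂ, IsCompOf c b ∧ b' ⊆ c))
    (hne : B.Nonempty) :
    B.card < P.ncard :=
  aux B.card P B hP rfl hsep hnest hne
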